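/- The negative log of the Cauchy CDF is not convex: for ψ(z) = 1/2 + (1/π) arctan(z), the function f(z) = -log ψ(z) satisfies f''(z) < 0 for all z < -√3. In particular, f is not convex on ℝ. -/

import Mathlib

open Real

private lemma cauchy_psi_pos (z : ℝ) : 0 < 1 / 2 + (1 / π) * Real.arctan z := by
  have h1 : -(π / 2) < Real.arctan z := Real.neg_pi_div_two_lt_arctan z
  have hπ : (0:ℝ) < π := Real.pi_pos
  have h2 : (1 / π) * (-(π / 2)) < (1 / π) * Real.arctan z :=
    mul_lt_mul_of_pos_left h1 (by positivity)
  have h3 : (1 / π) * (-(π / 2)) = -(1/2 : ℝ) := by field_simp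
  linarith [h3 ▸ h2]

private lemma arctan_ge (x : ℝ) (hx0 : 0 ≤ x) (hx : x ≤ 1 / Real.sqrt 3) :
    (3/4 : ℝ) * x ≤ Real.arctan x := by
  have key := Convex.mul_sub_le_image_sub_of_le_deriv (convex_Icc 0 (1 / Real.sqrt 3))
    (Real.continuous_arctan.continuousOn)
    (fun y _ => Real.differentiable_arctan.differentiableAt.differentiableWithinAt)
    (C := 3/4) ?_ 0 ⟨le_refl 0, by positivity⟩ x ⟨hx0, hx⟩ hx0
  · simpa using key
  · intro y hy
    rw [interior_Icc] at hy
    rw [Real.deriv_arctan]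
    have h3 : (0:ℝ) < Real.sqrt 3 := by positivity
    have hy2 : y ^ 2 < 1 / 3 := by
      have hlt : y < 1 / Real.sqrt 3 := hy.2
      have hsq : Real.sqrt 3 ^ 2 = 3 := Real.sq_sqrt (by norm_num)
      have hys : y * Real.sqrt 3 < 1 := (lt_div_iff₀ h3).mp hlt
      nlinarith [hy.1, mul_pos hy.1 h3]
    show (3/4 : ℝ) ≤ 1 / (1 + y ^ 2)
    rw [le_div_iff₀ (by nlinarith)]
    nlinarith

private lemma key_ineq (z : ℝ) (hz : z < -Real.sqrt 3) :
    2 * z * (1 / 2 + (1 / π) * Real.arctan z) + 1 / π < 0 := by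
  have hπ : (0:ℝ) < π := Real.pi_pos
  have h3 : (0:ℝ) < Real.sqrt 3 := by positivity
  set t : ℝ := -z with ht
  have htpos : Real.sqrt 3 < t := by simp [ht]; linarith
  have ht0 : 0 < t := lt_trans h3 htpos
  have harc : Real.arctan t⁻¹ = π / 2 - Real.arctan t := Real.arctan_inv_of_pos ht0
  have hbound : (3/4 : ℝ) * t⁻¹ ≤ Real.arctan t⁻¹ := by
    apply arctan_ge
    · positivity
    · rw [one_div]
      exact (inv_anti₀ h3 htpos.le)
  -- so π/2 - arctan t ≥ (3/4)/t, i.e. t*(π - 2 arctan t) ≥ 3/2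
  have hmain : (3/2 : ℝ) ≤ t * (π - 2 * Real.arctan t) := by
    have h1 : (3/4 : ℝ) * t⁻¹ ≤ π / 2 - Real.arctan t := harc ▸ hbound
    have h2 : t * ((3/4 : ℝ) * t⁻¹) ≤ t * (π / 2 - Real.arctan t) :=
      mul_le_mul_of_nonneg_left h1 ht0.le
    have h4 : t * ((3/4 : ℝ) * t⁻¹) = 3/4 := by field_simp
    nlinarith
  have hatz : Real.arctan z = -Real.arctan t := by
    rw [ht, Real.arctan_neg]; ring
  -- goal: 2z(1/2 + arctan z/π) + 1/π < 0; multiply by π > 0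
  have hπexpr : π * (2 * z * (1 / 2 + (1 / π) * Real.arctan z) + 1 / π)
      = z * π + 2 * z * Real.arctan z + 1 := by
    field_simp
  have hneg : z * π + 2 * z * Real.arctan z + 1 < 0 := by
    have hz' : z = -t := by rw [ht]; ring
    rw [hatz, hz']
    nlinarith
  by_contra hcon
  push_neg at hcon
  nlinarith [mul_nonneg hπ.le hcon]

private lemma monotone_hasDerivAt_nonneg {g : ℝ → ℝ} {g' x : ℝ} (hg : Monotone g)
    (h : HasDerivAt g g' x) : 0 ≤ g' := by
  have ht : Filter.Tendsto (slope g x) (nhdsWithin x (Set.Ioi x)) (nhds g') :=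
    (hasDerivAt_iff_tendsto_slope.mp h).mono_left
      (nhdsWithin_mono x (fun y hy => ne_of_gt hy))
  refine ge_of_tendsto ht ?_
  filter_upwards [self_mem_nhdsWithin] with y hy
  have hxy : x < y := hy
  rw [slope_def_field]
  have : g x ≤ g y := hg hxy.le
  have : 0 ≤ (g y - g x) / (y - x) := div_nonneg (by linarith) (by linarith)
  simpa [div_eq_inv_mul, sub_div] using this

/-- The negative log of the standard Cauchy CDF `ψ(z) = 1/2 + (1/π) arctan z` has
negative second derivative for all `z < -√3`; in particular `-log ψ` is not convex on `ℝ`. -/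
theorem neg_log_cauchy_cdf_not_convex
    (ψ : ℝ → ℝ) (hψ : ∀ z, ψ z = 1 / 2 + (1 / π) * Real.arctan z)
    (f : ℝ → ℝ) (hf : ∀ z, f z = -Real.log (ψ z)) :
    (∀ z : ℝ, z < -Real.sqrt 3 → deriv (deriv f) z < 0) ∧
    ¬ ConvexOn ℝ Set.univ f := by
  have hπ : (0:ℝ) < π := Real.pi_pos
  set F : ℝ → ℝ := fun z => 1 / 2 + (1 / π) * Real.arctan z with hF
  have hFpos : ∀ z, 0 < F z := cauchy_psi_pos
  have hfun : f = fun z => -Real.log (F z) := by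
    funext z; rw [hf z, hψ z]
  have hplus : ∀ z : ℝ, (0:ℝ) < 1 + z ^ 2 := fun z => by positivity
  -- derivative of F
  have hFderiv : ∀ z : ℝ, HasDerivAt F ((1 / π) * (1 / (1 + z ^ 2))) z := fun z =>
    ((Real.hasDerivAt_arctan z).const_mul (1 / π)).const_add (1 / 2)
  -- first derivative of f
  have hf1 : ∀ z : ℝ, HasDerivAt f (-((1 / π) * (((1 + z ^ 2) * F z)⁻¹))) z := by
    intro z
    have hlog : HasDerivAt (fun z => Real.log (F z))
        ((F z)⁻¹ * ((1 / π) * (1 / (1 + z ^ 2)))) z :=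
      (Real.hasDerivAt_log (ne_of_gt (hFpos z))).comp z (hFderiv z)
    have := hlog.neg
    rw [hfun]
    convert this using 1
    iterate 3 rfl
    rw [mul_inv]
    field_simp
  have hderivf : deriv f = fun z => -((1 / π) * (((1 + z ^ 2) * F z)⁻¹)) := by
    funext z; exact (hf1 z).deriv
  -- second derivative
  have hf2 : ∀ z : ℝ, HasDerivAt (deriv f)
      ((1 / π) * ((2 * z * F z + 1 / π) / ((1 + z ^ 2) * F z) ^ 2)) z := by
    intro z
    have hu : HasDerivAt (fun z => (1 + z ^ 2) * F z) (2 * z * F z + 1 / π) z := by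
      have h1 : HasDerivAt (fun z : ℝ => 1 + z ^ 2) (2 * z) z := by
        simpa using ((hasDerivAt_pow 2 z).const_add 1)
      have := h1.mul (hFderiv z)
      convert this using 1
      iterate 3 rfl
      field_simp
    have hune : (1 + z ^ 2) * F z ≠ 0 := ne_of_gt (mul_pos (hplus z) (hFpos z))
    have hinv := hu.inv hune
    have := (hinv.const_mul (1 / π)).neg
    rw [hderivf]
    convert this using 1
    iterate 3 rfl
    field_simp
  refine ⟨?_, ?_⟩
  · intro z hz
    have hd := (hf2 z).deriv
    rw [hd]
    have hnum : 2 * z * F z + 1 / π < 0 := key_ineq z hz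
    have hden : (0:ℝ) < ((1 + z ^ 2) * F z) ^ 2 :=
      pow_pos (mul_pos (hplus z) (hFpos z)) 2
    have : (2 * z * F z + 1 / π) / ((1 + z ^ 2) * F z) ^ 2 < 0 :=
      div_neg_of_neg_of_pos hnum hden
    have hc : (0:ℝ) < 1 / π := by positivity
    exact mul_neg_of_pos_of_neg hc this
  · intro hconv
    have hmono : Monotone (deriv f) := by
      have := hconv.monotoneOn_deriv (fun x _ => (hf1 x).differentiableAt)
      intro a b hab
      exact this (Set.mem_univ a) (Set.mem_univ b) hab
    have h2 : 0 ≤ (1 / π) * ((2 * (-2) * F (-2) + 1 / π) / ((1 + (-2:ℝ) ^ 2) * F (-2)) ^ 2) :=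
      monotone_hasDerivAt_nonneg hmono (hf2 (-2))
    have hz2 : (-2:ℝ) < -Real.sqrt 3 := by
      have : Real.sqrt 3 < 2 := by
        rw [show (2:ℝ) = Real.sqrt 4 by rw [show (4:ℝ) = 2^2 by norm_num, Real.sqrt_sq]; norm_num]
        exact Real.sqrt_lt_sqrt (by norm_num) (by norm_num)
      linarith
    have hnum : 2 * (-2) * F (-2) + 1 / π < 0 := key_ineq (-2) hz2
    have hden : (0:ℝ) < ((1 + (-2:ℝ) ^ 2) * F (-2)) ^ 2 :=
      pow_pos (mul_pos (hplus (-2)) (hFpos (-2))) 2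
    have hneg : (1 / π) * ((2 * (-2) * F (-2) + 1 / π) / ((1 + (-2:ℝ) ^ 2) * F (-2)) ^ 2) < 0 :=
      mul_neg_of_pos_of_neg (by positivity) (div_neg_of_neg_of_pos hnum hden)
    linarith
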